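/- Let S and T be finite nonempty types. Let q : S → ℝ be a probability distribution on S (q s ≥ 0 for all s and ∑_{s} q s = 1), and for each s ∈ S let k s : T → ℝ be a probability distribution on T (k s t > 0 for all t and ∑_{t} k s t = 1). Define the marginal m : T → ℝ by m t = ∑_{s} q s * k s t. Then for every function F : S → T → ℝ, the Donsker–Varadhan-type lower bound holds: (∑_{s} ∑_{t} q s * k s t * F s t) − Real.log (∑_{s} ∑_{t} q s * m t * Real.exp (F s t)) ≤ ∑_{s} ∑_{t} q s * k s t * Real.log (k s t / m t). -/

import Mathlib

theorem donsker_varadhan_lower_bound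
    {S T : Type*} [Fintype S] [Fintype T] [Nonempty S] [Nonempty T]
    (q : S → ℝ) (k : S → T → ℝ)
    (hq : ∀ s, 0 ≤ q s) (hq1 : ∑ s, q s = 1)
    (hk : ∀ s t, 0 < k s t) (hk1 : ∀ s, ∑ t, k s t = 1)
    (m : T → ℝ) (hm : ∀ t, m t = ∑ s, q s * k s t)
    (F : S → T → ℝ) :
    (∑ s, ∑ t, q s * k s t * F s t) -
        Real.log (∑ s, ∑ t, q s * m t * Real.exp (F s t)) ≤
      ∑ s, ∑ t, q s * k s t * Real.log (k s t / m t) := by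
  set Z := ∑ s, ∑ t, q s * m t * Real.exp (F s t) with hZ
  obtain ⟨s₀, hs₀⟩ : ∃ s, 0 < q s := by
    by_contra h
    push_neg at h
    have h0 : ∑ s, q s = 0 :=
      Finset.sum_eq_zero fun s _ => le_antisymm (h s) (hq s)
    rw [h0] at hq1; norm_num at hq1
  have hmpos : ∀ t, 0 < m t := fun t => by
    rw [hm]
    exact Finset.sum_pos' (fun s _ => mul_nonneg (hq s) (hk s t).le)
      ⟨s₀, Finset.mem_univ s₀, mul_pos hs₀ (hk s₀ t)⟩
  have hZpos : 0 < Z := by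
    rw [hZ]
    refine Finset.sum_pos' (fun s _ => Finset.sum_nonneg fun t _ =>
      mul_nonneg (mul_nonneg (hq s) (hmpos t).le) (Real.exp_pos _).le)
      ⟨s₀, Finset.mem_univ s₀, Finset.sum_pos
        (fun t _ => mul_pos (mul_pos hs₀ (hmpos t)) (Real.exp_pos _)) Finset.univ_nonempty⟩
  have key : ∀ s t,
      q s * k s t * F s t - q s * k s t * Real.log (k s t / m t)
        - q s * k s t * Real.log Z
      ≤ q s * m t * Real.exp (F s t) / Z - q s * k s t := by
    intro s t
    have hX : 0 < m t * Real.exp (F s t) / k s t :=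
      div_pos (mul_pos (hmpos t) (Real.exp_pos _)) (hk s t)
    have h1 : Real.log (m t * Real.exp (F s t) / k s t) - Real.log Z ≤
        m t * Real.exp (F s t) / k s t / Z - 1 := by
      have := Real.log_le_sub_one_of_pos (div_pos hX hZpos)
      rwa [Real.log_div (ne_of_gt hX) (ne_of_gt hZpos)] at this
    have h2 : F s t - Real.log (k s t / m t) =
        Real.log (m t * Real.exp (F s t) / k s t) := by
      rw [Real.log_div (ne_of_gt (mul_pos (hmpos t) (Real.exp_pos _))) (ne_of_gt (hk s t)),
          Real.log_mul (ne_of_gt (hmpos t)) (Real.exp_ne_zero _),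
          Real.log_exp, Real.log_div (ne_of_gt (hk s t)) (ne_of_gt (hmpos t))]
      ring
    have hp : 0 ≤ q s * k s t := mul_nonneg (hq s) (hk s t).le
    have h3 : q s * k s t * (F s t - Real.log (k s t / m t) - Real.log Z) ≤
        q s * k s t * (m t * Real.exp (F s t) / k s t / Z - 1) := by
      apply mul_le_mul_of_nonneg_left _ hp
      rw [h2]; linarith
    have hkne : k s t ≠ 0 := ne_of_gt (hk s t)
    calc q s * k s t * F s t - q s * k s t * Real.log (k s t / m t)
          - q s * k s t * Real.log Z
        = q s * k s t * (F s t - Real.log (k s t / m t) - Real.log Z) := by ring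
      _ ≤ q s * k s t * (m t * Real.exp (F s t) / k s t / Z - 1) := h3
      _ = q s * m t * Real.exp (F s t) / Z - q s * k s t := by
          field_simp
  have hsum : ∑ s, ∑ t,
      (q s * k s t * F s t - q s * k s t * Real.log (k s t / m t)
        - q s * k s t * Real.log Z)
      ≤ ∑ s, ∑ t, (q s * m t * Real.exp (F s t) / Z - q s * k s t) :=
    Finset.sum_le_sum fun s _ => Finset.sum_le_sum fun t _ => key s t
  have hpk : ∑ s, ∑ t, q s * k s t = 1 := by
    have : ∀ s, ∑ t, q s * k s t = q s := fun s => by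
      rw [← Finset.mul_sum, hk1, mul_one]
    simp only [this, hq1]
  have hlogZ : ∑ s, ∑ t, q s * k s t * Real.log Z = Real.log Z := by
    have : ∑ s, ∑ t, q s * k s t * Real.log Z
        = (∑ s, ∑ t, q s * k s t) * Real.log Z := by
      rw [Finset.sum_mul]
      exact Finset.sum_congr rfl fun s _ => (Finset.sum_mul _ _ _).symm
    rw [this, hpk, one_mul]
  have hZdiv : ∑ s, ∑ t, q s * m t * Real.exp (F s t) / Z = 1 := by
    have : ∑ s, ∑ t, q s * m t * Real.exp (F s t) / Z
        = (∑ s, ∑ t, q s * m t * Real.exp (F s t)) / Z := by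
      rw [Finset.sum_div]
      exact Finset.sum_congr rfl fun s _ => (Finset.sum_div _ _ _).symm
    rw [this, ← hZ, div_self (ne_of_gt hZpos)]
  simp only [Finset.sum_sub_distrib] at hsum
  rw [hlogZ, hZdiv, hpk] at hsum
  linarith
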